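/- Let F be a set of d-dimensional density matrices and O a set of quantum channels that is convex, contains the identity channel, contains the state-preparation channel of every state in F, is closed under composition, maps F into F (i.e., N(η) ∈ F for all η ∈ F, N ∈ O), and whose limit points in diamond norm belong to O. Then F is convex and compact in the trace-norm topology. -/

import Mathlib

open Matrix ComplexOrder BigOperators Filter

noncomputable section

/-- A density matrix: positive semidefinite with unit trace. -/
def IsDensity {d : ℕ} (ρ : Matrix (Fin d) (Fin d) ℂ) : Prop :=
  ρ.PosSemidef ∧ ρ.trace = 1

/-- Loewner order: `A ≤ B` iff `B - A` is positive semidefinite. -/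
def loewner {d : ℕ} (A B : Matrix (Fin d) (Fin d) ℂ) : Prop :=
  (B - A).PosSemidef

/-- Trace norm `‖A‖₁ = tr √(AᴴA)`. -/
noncomputable def traceNorm {n : Type*} [Fintype n] [DecidableEq n]
    (A : Matrix n n ℂ) : ℝ :=
  (((Matrix.posSemidef_conjTranspose_mul_self A).1.eigenvectorUnitary : Matrix n n ℂ) *
    Matrix.diagonal (fun i =>
      ((Real.sqrt ((Matrix.posSemidef_conjTranspose_mul_self A).1.eigenvalues i) : ℝ) : ℂ)) *
    (star (Matrix.posSemidef_conjTranspose_mul_self A).1.eigenvectorUnitary :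
      Matrix n n ℂ)).trace.re

/-- Choi matrix of a linear map on matrices. -/
def choi {d : ℕ} (Λ : Matrix (Fin d) (Fin d) ℂ →ₗ[ℂ] Matrix (Fin d) (Fin d) ℂ) :
    Matrix (Fin d × Fin d) (Fin d × Fin d) ℂ :=
  Matrix.of fun p q => Λ (Matrix.single p.2 q.2 1) p.1 q.1

/-- A quantum channel: completely positive (PSD Choi matrix) and trace preserving. -/
def IsCPTP {d : ℕ} (Λ : Matrix (Fin d) (Fin d) ℂ →ₗ[ℂ] Matrix (Fin d) (Fin d) ℂ) : Prop :=
  (choi Λ).PosSemidef ∧ ∀ X, (Λ X).trace = X.trace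

/-- The extension `Λ ⊗ id` of a map to a bipartite system with an ancilla of equal dimension. -/
def tensExt {d : ℕ} (Λ : Matrix (Fin d) (Fin d) ℂ →ₗ[ℂ] Matrix (Fin d) (Fin d) ℂ)
    (M : Matrix (Fin d × Fin d) (Fin d × Fin d) ℂ) :
    Matrix (Fin d × Fin d) (Fin d × Fin d) ℂ :=
  Matrix.of fun p q => Λ (Matrix.of fun i j => M (i, p.2) (j, q.2)) p.1 q.1

/-- Diamond norm: `‖Λ‖_◇ = sup_ρ ‖(Λ ⊗ id)(ρ)‖₁` over bipartite states. -/
noncomputable def diamondNorm {d : ℕ}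
    (Λ : Matrix (Fin d) (Fin d) ℂ →ₗ[ℂ] Matrix (Fin d) (Fin d) ℂ) : ℝ :=
  sSup {x | ∃ ρ : Matrix (Fin d × Fin d) (Fin d × Fin d) ℂ,
    ρ.PosSemidef ∧ ρ.trace = 1 ∧ x = traceNorm (tensExt Λ ρ)}

/-- Compactness (sequential form) of a set of maps in the diamond-norm topology. -/
def DiamondSeqCompact {d : ℕ}
    (O : Set (Matrix (Fin d) (Fin d) ℂ →ₗ[ℂ] Matrix (Fin d) (Fin d) ℂ)) : Prop :=
  ∀ f : ℕ → (Matrix (Fin d) (Fin d) ℂ →ₗ[ℂ] Matrix (Fin d) (Fin d) ℂ),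
    (∀ n, f n ∈ O) → ∃ Λ ∈ O, ∃ φ : ℕ → ℕ, StrictMono φ ∧
      Filter.Tendsto (fun n => diamondNorm (f (φ n) - Λ)) Filter.atTop (nhds 0)

/-- State-preparation channel `X ↦ tr(X) • η`. -/
def prepChannel {d : ℕ} (η : Matrix (Fin d) (Fin d) ℂ) :
    Matrix (Fin d) (Fin d) ℂ →ₗ[ℂ] Matrix (Fin d) (Fin d) ℂ where
  toFun X := X.trace • η
  map_add' X Y := by simp [trace_add, add_smul]
  map_smul' c X := by simp [smul_smul]

/-- Matrix logarithm of a Hermitian matrix (via spectral decomposition); junk value otherwise. -/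
noncomputable def mlog {d : ℕ} (A : Matrix (Fin d) (Fin d) ℂ) : Matrix (Fin d) (Fin d) ℂ :=
  if hA : A.IsHermitian then
    (hA.eigenvectorUnitary : Matrix (Fin d) (Fin d) ℂ) *
      Matrix.diagonal (fun i => (Real.log (hA.eigenvalues i) : ℂ)) *
      (hA.eigenvectorUnitary : Matrix (Fin d) (Fin d) ℂ)ᴴ
  else 0

/-- Matrix exponential. -/
noncomputable def mexp {d : ℕ} (A : Matrix (Fin d) (Fin d) ℂ) : Matrix (Fin d) (Fin d) ℂ :=
  NormedSpace.exp A

/-- Quantum (Umegaki) relative entropy in bits: `D(ρ‖σ) = tr[ρ (log₂ ρ - log₂ σ)]`. -/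
noncomputable def relEnt {d : ℕ} (ρ σ : Matrix (Fin d) (Fin d) ℂ) : ℝ :=
  ((ρ * ((Real.log 2)⁻¹ • (mlog ρ - mlog σ))).trace).re

section Aux

open Topology

variable {n : Type*} [Fintype n] [DecidableEq n]

def hsqrt (A : Matrix n n ℂ) (hA : A.IsHermitian) : Matrix n n ℂ :=
  (hA.eigenvectorUnitary : Matrix n n ℂ) *
    Matrix.diagonal (fun i => ((Real.sqrt (hA.eigenvalues i) : ℝ) : ℂ)) *
    (star hA.eigenvectorUnitary : Matrix n n ℂ)

lemma hsqrt_psd (A : Matrix n n ℂ) (hA : A.IsHermitian) : (hsqrt A hA).PosSemidef := by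
  have h := (Matrix.PosSemidef.diagonal (d := fun i => ((Real.sqrt (hA.eigenvalues i) : ℝ) : ℂ))
    (fun i => by simp [Complex.zero_le_real, Real.sqrt_nonneg])).mul_mul_conjTranspose_same
    (hA.eigenvectorUnitary : Matrix n n ℂ)
  unfold hsqrt
  rw [Matrix.star_eq_conjTranspose]
  exact h

lemma hsqrt_mul_self {A : Matrix n n ℂ} (hA : A.PosSemidef) :
    hsqrt A hA.1 * hsqrt A hA.1 = A := by
  have hU := Unitary.coe_star_mul_self hA.1.eigenvectorUnitary
  have hD : Matrix.diagonal (fun i => ((Real.sqrt (hA.1.eigenvalues i) : ℝ) : ℂ)) *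
      Matrix.diagonal (fun i => ((Real.sqrt (hA.1.eigenvalues i) : ℝ) : ℂ)) =
      Matrix.diagonal (RCLike.ofReal ∘ hA.1.eigenvalues) := by
    rw [Matrix.diagonal_mul_diagonal]; congr 1; funext i
    simp only [Function.comp_apply]
    rw [← Complex.ofReal_mul, Real.mul_self_sqrt (hA.eigenvalues_nonneg i)]; rfl
  conv_rhs => rw [hA.1.spectral_theorem, Unitary.conjStarAlgAut_apply, ← hD]
  simp only [hsqrt, Unitary.coe_star, mul_assoc]
  rw [← mul_assoc (star (hA.1.eigenvectorUnitary : Matrix n n ℂ))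
    (hA.1.eigenvectorUnitary : Matrix n n ℂ), hU, one_mul]


lemma psd_diag_nonneg {A : Matrix n n ℂ} (hA : A.PosSemidef) (i : n) :
    0 ≤ (A i i).re ∧ (A i i).im = 0 := by
  have h := Complex.nonneg_iff.1 (hA.diag_nonneg (i := i))
  exact ⟨h.1, h.2.symm⟩

lemma trace_re_conjTranspose_mul (A : Matrix n n ℂ) :
    (Aᴴ * A).trace.re = ∑ i, ∑ j, ‖A i j‖ ^ 2 := by
  rw [Matrix.trace]
  rw [Complex.re_sum]
  rw [Finset.sum_comm]
  refine Finset.sum_congr rfl fun i _ => ?_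
  simp only [Matrix.diag_apply, Matrix.mul_apply, Complex.re_sum, Matrix.conjTranspose_apply]
  refine Finset.sum_congr rfl fun j _ => ?_
  simp [← Complex.normSq_eq_conj_mul_self, Complex.normSq_eq_norm_sq, ← Complex.ofReal_pow]

lemma traceNorm_eq_sum (A : Matrix n n ℂ) :
    traceNorm A = ∑ i, (hsqrt _ (Matrix.posSemidef_conjTranspose_mul_self A).1 i i).re := by
  rw [traceNorm, Matrix.trace, Complex.re_sum]; rfl

lemma traceNorm_nonneg (A : Matrix n n ℂ) : 0 ≤ traceNorm A := by
  rw [traceNorm_eq_sum]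
  exact Finset.sum_nonneg fun i _ =>
    (psd_diag_nonneg (hsqrt_psd _ (Matrix.posSemidef_conjTranspose_mul_self A).1) i).1

lemma traceNorm_le (A : Matrix n n ℂ) :
    traceNorm A ≤ Real.sqrt ((Fintype.card n) * ∑ i, ∑ j, ‖A i j‖ ^ 2) := by
  set S := hsqrt _ (Matrix.posSemidef_conjTranspose_mul_self A).1 with hSdef
  have hS : S.PosSemidef := hsqrt_psd _ (Matrix.posSemidef_conjTranspose_mul_self A).1
  refine Real.le_sqrt_of_sq_le ?_
  have h1 : (traceNorm A) ^ 2 ≤ (Fintype.card n) * ∑ i, (S i i).re ^ 2 := by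
    rw [traceNorm_eq_sum]
    simpa using sq_sum_le_card_mul_sum_sq (s := Finset.univ) (f := fun i => (S i i).re)
  have h2 : ∑ i, (S i i).re ^ 2 ≤ ∑ i, ∑ j, ‖S j i‖ ^ 2 := by
    refine Finset.sum_le_sum fun i _ => ?_
    have e1 : (S i i).re ^ 2 ≤ ‖S i i‖ ^ 2 := by
      rw [Complex.sq_norm, Complex.normSq_apply]
      nlinarith [sq_nonneg (S i i).im]
    exact e1.trans (Finset.single_le_sum (fun j _ => sq_nonneg ‖S j i‖) (Finset.mem_univ i))
  have h3 : ∑ i, ∑ j, ‖S j i‖ ^ 2 = ∑ i, ∑ j, ‖A i j‖ ^ 2 := by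
    rw [Finset.sum_comm, ← trace_re_conjTranspose_mul S, hS.1,
      hsqrt_mul_self (Matrix.posSemidef_conjTranspose_mul_self A),
      trace_re_conjTranspose_mul]
  calc (traceNorm A) ^ 2 ≤ (Fintype.card n) * ∑ i, (S i i).re ^ 2 := h1
    _ ≤ (Fintype.card n) * ∑ i, ∑ j, ‖S j i‖ ^ 2 :=
        mul_le_mul_of_nonneg_left h2 (by positivity)
    _ = _ := by rw [h3]

lemma psd_diag_re_eq {A : Matrix n n ℂ} (hA : A.PosSemidef) (a : n) :
    (A a a).re = ∑ i, ‖hsqrt A hA.1 i a‖ ^ 2 := by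
  conv_lhs => rw [← hsqrt_mul_self hA]
  simp only [Matrix.mul_apply, Complex.re_sum]
  refine Finset.sum_congr rfl fun i _ => ?_
  rw [← (hsqrt_psd A hA.1).1.apply a i]
  simp [← Complex.normSq_eq_conj_mul_self, Complex.normSq_eq_norm_sq,
    ← Complex.ofReal_pow]

lemma psd_entry_norm_le_one {A : Matrix n n ℂ} (hA : A.PosSemidef) (ht : A.trace = 1)
    (a b : n) : ‖A a b‖ ≤ 1 := by
  set S := hsqrt A hA.1 with hSdef
  have hdiag : ∀ c : n, (A c c).re ≤ 1 := by
    intro c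
    have h1 : ∑ i, (A i i).re = 1 := by
      have := congrArg Complex.re ht
      rw [Matrix.trace, Complex.re_sum] at this
      simpa using this
    rw [← h1]
    exact Finset.single_le_sum (fun i _ => (psd_diag_nonneg hA i).1) (Finset.mem_univ c)
  have hab : A a b = ∑ i, (starRingEnd ℂ) (S i a) * S i b := by
    conv_lhs => rw [← hsqrt_mul_self hA]
    simp only [Matrix.mul_apply]
    exact Finset.sum_congr rfl fun i _ => by rw [← (hsqrt_psd A hA.1).1.apply a i]; rfl
  have h2 : ‖A a b‖ ≤ ∑ i, ‖S i a‖ * ‖S i b‖ := by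
    rw [hab]
    refine (norm_sum_le _ _).trans (le_of_eq ?_)
    refine Finset.sum_congr rfl fun i _ => ?_
    rw [norm_mul, RingHomIsometric.norm_map]
  have hcs : (∑ i, ‖S i a‖ * ‖S i b‖) ^ 2 ≤ (∑ i, ‖S i a‖ ^ 2) * ∑ i, ‖S i b‖ ^ 2 :=
    Finset.sum_mul_sq_le_sq_mul_sq _ _ _
  have h3 : ‖A a b‖ ^ 2 ≤ 1 := by
    have e1 := psd_diag_re_eq hA a
    have e2 := psd_diag_re_eq hA b
    have : ‖A a b‖ ^ 2 ≤ (∑ i, ‖S i a‖ * ‖S i b‖) ^ 2 := by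
      have hnn : (0:ℝ) ≤ ∑ i, ‖S i a‖ * ‖S i b‖ :=
        Finset.sum_nonneg fun i _ => mul_nonneg (norm_nonneg _) (norm_nonneg _)
      exact pow_le_pow_left₀ (norm_nonneg _) h2 2
    refine this.trans (hcs.trans ?_)
    have := mul_le_one₀ (a := ∑ i, ‖S i a‖ ^ 2) (b := ∑ i, ‖S i b‖ ^ 2)
    calc (∑ i, ‖S i a‖ ^ 2) * ∑ i, ‖S i b‖ ^ 2
        ≤ 1 * 1 := by
          refine mul_le_mul ?_ ?_ (Finset.sum_nonneg fun i _ => sq_nonneg _) zero_le_one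
          · rw [← e1]; exact hdiag a
          · rw [← e2]; exact hdiag b
      _ = 1 := one_mul 1
  nlinarith [norm_nonneg (A a b)]



lemma prepChannel_apply {d : ℕ} (η X : Matrix (Fin d) (Fin d) ℂ) :
    prepChannel η X = X.trace • η := rfl

lemma prepChannel_sub {d : ℕ} (a b : Matrix (Fin d) (Fin d) ℂ) :
    prepChannel a - prepChannel b = prepChannel (a - b) := by
  ext X : 1
  simp [prepChannel_apply, smul_sub]

lemma tensExt_prep {d : ℕ} (M : Matrix (Fin d) (Fin d) ℂ)
    (ρ : Matrix (Fin d × Fin d) (Fin d × Fin d) ℂ) (p q : Fin d × Fin d) :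
    tensExt (prepChannel M) ρ p q = (∑ i, ρ (i, p.2) (i, q.2)) * M p.1 q.1 := by
  simp [tensExt, prepChannel_apply, Matrix.trace, Matrix.diag]

lemma diamondNorm_prep_le {d : ℕ} (M : Matrix (Fin d) (Fin d) ℂ) :
    diamondNorm (prepChannel M) ≤ (d : ℝ) ^ 3 * Real.sqrt (∑ i, ∑ j, ‖M i j‖ ^ 2) := by
  have hs : (0:ℝ) ≤ ∑ i, ∑ j, ‖M i j‖ ^ 2 := by positivity
  refine Real.sSup_le ?_ (by positivity)
  rintro x ⟨ρ, hρ, hτ, rfl⟩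
  have hb : ∀ p q : Fin d × Fin d,
      ‖tensExt (prepChannel M) ρ p q‖ ^ 2 ≤ (d:ℝ)^2 * ‖M p.1 q.1‖ ^ 2 := by
    intro p q
    rw [tensExt_prep, norm_mul]
    have h1 : ‖∑ i, ρ (i, p.2) (i, q.2)‖ ≤ (d:ℝ) := by
      refine (norm_sum_le _ _).trans ?_
      calc ∑ i : Fin d, ‖ρ (i, p.2) (i, q.2)‖ ≤ ∑ _i : Fin d, (1:ℝ) :=
            Finset.sum_le_sum fun i _ => psd_entry_norm_le_one hρ hτ _ _
        _ = (d:ℝ) := by simp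
    calc (‖∑ i, ρ (i, p.2) (i, q.2)‖ * ‖M p.1 q.1‖) ^ 2
        = ‖∑ i, ρ (i, p.2) (i, q.2)‖ ^ 2 * ‖M p.1 q.1‖ ^ 2 := by ring
      _ ≤ (d:ℝ)^2 * ‖M p.1 q.1‖ ^ 2 := by
          have := pow_le_pow_left₀ (norm_nonneg _) h1 2
          exact mul_le_mul_of_nonneg_right this (sq_nonneg _)
  have key : ∑ p : Fin d × Fin d, ∑ q : Fin d × Fin d, ‖tensExt (prepChannel M) ρ p q‖ ^ 2
      ≤ (d:ℝ)^4 * ∑ i, ∑ j, ‖M i j‖ ^ 2 := by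
    calc ∑ p : Fin d × Fin d, ∑ q : Fin d × Fin d, ‖tensExt (prepChannel M) ρ p q‖ ^ 2
        ≤ ∑ p : Fin d × Fin d, ∑ q : Fin d × Fin d, (d:ℝ)^2 * ‖M p.1 q.1‖ ^ 2 :=
          Finset.sum_le_sum fun p _ => Finset.sum_le_sum fun q _ => hb p q
      _ = (d:ℝ)^4 * ∑ i, ∑ j, ‖M i j‖ ^ 2 := by
          simp only [Fintype.sum_prod_type, Finset.sum_const, Finset.card_univ,
            Fintype.card_fin, nsmul_eq_mul, Finset.mul_sum]
          ring_nf
  calc traceNorm (tensExt (prepChannel M) ρ)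
      ≤ Real.sqrt ((Fintype.card (Fin d × Fin d)) *
          ∑ p, ∑ q, ‖tensExt (prepChannel M) ρ p q‖ ^ 2) := traceNorm_le _
    _ ≤ Real.sqrt ((d:ℝ)^2 * ((d:ℝ)^4 * ∑ i, ∑ j, ‖M i j‖ ^ 2)) := by
        refine Real.sqrt_le_sqrt ?_
        have hcard : (Fintype.card (Fin d × Fin d) : ℝ) = (d:ℝ)^2 := by
          simp [Fintype.card_prod]; ring
        rw [hcard]
        exact mul_le_mul_of_nonneg_left key (by positivity)
    _ = (d:ℝ)^3 * Real.sqrt (∑ i, ∑ j, ‖M i j‖ ^ 2) := by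
        rw [show ((d:ℝ)^2 * ((d:ℝ)^4 * ∑ i, ∑ j, ‖M i j‖ ^ 2))
            = ((d:ℝ)^3)^2 * ∑ i, ∑ j, ‖M i j‖ ^ 2 by ring,
          Real.sqrt_mul (sq_nonneg _), Real.sqrt_sq (by positivity)]


end Aux

open Topology

/-- If `O` is a set of channels that is convex, contains the identity, contains
all state-preparation channels of states in `F`, is closed under composition, maps `F` into `F`,
and contains all of its diamond-norm limit points, then `F` is convex and compact (sequential
formulation) in the trace-norm topology. -/
theorem statement6 {d : ℕ} (F : Set (Matrix (Fin d) (Fin d) ℂ))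
    (O : Set (Matrix (Fin d) (Fin d) ℂ →ₗ[ℂ] Matrix (Fin d) (Fin d) ℂ))
    (hFd : ∀ η ∈ F, IsDensity η)
    (hOcptp : ∀ N ∈ O, IsCPTP N)
    (hOconv : Convex ℝ O)
    (hid : (LinearMap.id : Matrix (Fin d) (Fin d) ℂ →ₗ[ℂ] Matrix (Fin d) (Fin d) ℂ) ∈ O)
    (hprep : ∀ η ∈ F, prepChannel η ∈ O)
    (hcomp : ∀ N ∈ O, ∀ M ∈ O, N ∘ₗ M ∈ O)
    (hfree : ∀ N ∈ O, ∀ η ∈ F, N η ∈ F)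
    (hlim : ∀ Λ : Matrix (Fin d) (Fin d) ℂ →ₗ[ℂ] Matrix (Fin d) (Fin d) ℂ,
      (∀ ε > (0 : ℝ), ∃ N ∈ O, diamondNorm (N - Λ) < ε) → Λ ∈ O) :
    Convex ℝ F ∧
      ∀ f : ℕ → Matrix (Fin d) (Fin d) ℂ, (∀ n, f n ∈ F) →
        ∃ η ∈ F, ∃ φ : ℕ → ℕ, StrictMono φ ∧
          Filter.Tendsto (fun n => traceNorm (f (φ n) - η)) Filter.atTop (nhds 0) := by
  have hconvF : Convex ℝ F := by
    intro x hx y hy a b ha hb hab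
    have hN : a • prepChannel x + b • prepChannel y ∈ O :=
      hOconv (hprep x hx) (hprep y hy) ha hb hab
    have hmem := hfree _ hN x hx
    have heq : (a • prepChannel x + b • prepChannel y) x = a • x + b • y := by
      simp [prepChannel_apply, (hFd x hx).2]
    rwa [heq] at hmem
  refine ⟨hconvF, ?_⟩
  intro f hf
  set f' : ℕ → (Fin d → Fin d → ℂ) := fun n => Matrix.of.symm (f n) with hf'
  have hball : ∀ n, f' n ∈ Metric.closedBall (0 : Fin d → Fin d → ℂ) 1 := by
    intro n
    rw [Metric.mem_closedBall, dist_zero_right]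
    refine (pi_norm_le_iff_of_nonneg zero_le_one).2 fun i => ?_
    refine (pi_norm_le_iff_of_nonneg zero_le_one).2 fun j => ?_
    exact psd_entry_norm_le_one (hFd _ (hf n)).1 (hFd _ (hf n)).2 i j
  obtain ⟨η, -, φ, hφ, hconv⟩ :=
    tendsto_subseq_of_bounded Metric.isBounded_closedBall hball
  have hent : ∀ i j, Tendsto (fun k => f (φ k) i j) atTop (𝓝 (η i j)) := by
    intro i j
    exact (tendsto_pi_nhds.1 ((tendsto_pi_nhds.1 hconv) i)) j
  set g : ℕ → ℝ := fun k => ∑ i, ∑ j, ‖(f (φ k) - Matrix.of η) i j‖ ^ 2 with hg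
  have hg0 : Tendsto g atTop (𝓝 0) := by
    have hterm : ∀ i j, Tendsto (fun k => ‖(f (φ k) - Matrix.of η) i j‖ ^ 2) atTop (𝓝 0) := by
      intro i j
      have h1 : Tendsto (fun k => f (φ k) i j - η i j) atTop (𝓝 0) := by
        simpa using (hent i j).sub_const (η i j)
      have h2 : Tendsto (fun k => ‖(f (φ k) - Matrix.of η) i j‖) atTop (𝓝 0) := by
        simpa using h1.norm
      simpa using h2.pow 2
    have := tendsto_finset_sum (Finset.univ : Finset (Fin d))
      (fun i _ => tendsto_finset_sum (Finset.univ : Finset (Fin d)) (fun j _ => hterm i j))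
    simpa [hg] using this
  have hsq : Tendsto (fun k => (d:ℝ)^3 * Real.sqrt (g k)) atTop (𝓝 0) := by
    have h1 : Tendsto (fun k => Real.sqrt (g k)) atTop (𝓝 0) := by
      have := (Real.continuous_sqrt.tendsto 0).comp hg0
      simpa only [Function.comp_def, Real.sqrt_zero] using this
    simpa using h1.const_mul ((d:ℝ)^3)
  have hprepη : prepChannel (Matrix.of η) ∈ O := by
    refine hlim _ fun ε hε => ?_
    obtain ⟨k, hk⟩ := (hsq.eventually_lt_const hε).exists
    refine ⟨prepChannel (f (φ k)), hprep _ (hf _), ?_⟩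
    rw [prepChannel_sub]
    exact lt_of_le_of_lt (diamondNorm_prep_le _) hk
  have hηF : Matrix.of η ∈ F := by
    have h := hfree _ hprepη (f 0) (hf 0)
    rwa [prepChannel_apply, (hFd _ (hf 0)).2, one_smul] at h
  refine ⟨Matrix.of η, hηF, φ, hφ, ?_⟩
  have hub : ∀ k, traceNorm (f (φ k) - Matrix.of η) ≤ Real.sqrt ((d:ℝ) * g k) := by
    intro k
    simpa [hg] using traceNorm_le (f (φ k) - Matrix.of η)
  have hlim2 : Tendsto (fun k => Real.sqrt ((d:ℝ) * g k)) atTop (𝓝 0) := by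
    have h0 : Tendsto (fun k => (d:ℝ) * g k) atTop (𝓝 0) := by
      simpa using hg0.const_mul (d:ℝ)
    have := (Real.continuous_sqrt.tendsto 0).comp h0
    simpa only [Function.comp_def, Real.sqrt_zero] using this
  exact squeeze_zero (fun k => traceNorm_nonneg _) hub hlim2
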